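/- Let I ⊂ R and J ⊂ T be nonzero proper graded ideals, identified with their extensions to S = R ⊗_K T. Then for every integer k ≥ 1 one has Ass((IJ)^k) = Ass(I^k) ∪ Ass(J^k), where all associated primes are computed over S. Consequently, Ass^∞(IJ) = Ass^∞(I) ∪ Ass^∞(J). -/

import Mathlib

open MvPolynomial

noncomputable section

/-- The set of associated primes `Ass(L)` of the quotient by an ideal `L`. -/
def assOf {A : Type} [CommRing A] (L : Ideal A) : Set (Ideal A) :=
  associatedPrimes A (A ⧸ L)

/-- `𝔄` is the stable value `Ass^∞(L)` of `Ass(L^k)` for all large `k`. -/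
def IsStableAssValue {A : Type} [CommRing A] (L : Ideal A) (𝔄 : Set (Ideal A)) : Prop :=
  ∃ N : ℕ, ∀ k : ℕ, N ≤ k → assOf (L ^ k) = 𝔄

/-- `Ass^*(L) = ⋃_{k ≥ 1} Ass(L^k)`. -/
def assStar {A : Type} [CommRing A] (L : Ideal A) : Set (Ideal A) :=
  {p | ∃ k : ℕ, 1 ≤ k ∧ p ∈ assOf (L ^ k)}

/-- The local v-number `v_p(L)`: the least degree of a homogeneous `f` with `(L : f) = p`. -/
def vnum {σ K : Type} [Field K] (L p : Ideal (MvPolynomial σ K)) : ℕ :=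
  sInf {d : ℕ | ∃ f : MvPolynomial σ K, f.IsHomogeneous d ∧ L.colon (Ideal.span {f}) = p}

/-- The v-number `v(L) = min_{p ∈ Ass(L)} v_p(L)`. -/
def vnumber {σ K : Type} [Field K] (L : Ideal (MvPolynomial σ K)) : ℕ :=
  sInf {d : ℕ | ∃ p ∈ assOf L, ∃ f : MvPolynomial σ K,
    f.IsHomogeneous d ∧ L.colon (Ideal.span {f}) = p}

/-- The initial degree `α(L)`: the least `d` such that `L` contains a nonzero
homogeneous element of degree `d`. -/
def alphaDeg {σ K : Type} [Field K] (L : Ideal (MvPolynomial σ K)) : ℕ :=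
  sInf {d : ℕ | ∃ f ∈ L, f ≠ 0 ∧ MvPolynomial.IsHomogeneous f d}

/-- A graded (homogeneous) ideal: one containing all homogeneous components
of each of its elements. -/
def IsGradedIdeal {σ K : Type} [Field K] (I : Ideal (MvPolynomial σ K)) : Prop :=
  ∀ f ∈ I, ∀ d : ℕ, homogeneousComponent d f ∈ I

/-- A monomial ideal: an ideal generated by monomials. -/
def IsMonomialIdeal {σ K : Type} [Field K] (I : Ideal (MvPolynomial σ K)) : Prop :=
  ∃ G : Set (σ →₀ ℕ), I = Ideal.span ((fun a => (monomial a (1 : K))) '' G)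

namespace Stmt0Aux


variable {A B : Type} [CommRing A] [CommRing B]

theorem mem_assOf_iff [IsNoetherianRing A] (L p : Ideal A) :
    p ∈ assOf L ↔ p.IsPrime ∧ ∃ f : A, p = L.colon (Ideal.span {f}) := by
  have key : ∀ (r f : A), r • (Ideal.Quotient.mk L f) = Ideal.Quotient.mk L (r * f) := by
    intro r f
    rw [← smul_eq_mul]
    rfl
  rw [assOf, AssociatedPrimes.mem_iff, isAssociatedPrime_iff]
  constructor
  · rintro ⟨hp, x, hx⟩
    obtain ⟨f, rfl⟩ := Ideal.Quotient.mk_surjective x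
    refine ⟨hp, f, ?_⟩
    rw [hx]; ext r
    rw [Submodule.mem_colon_singleton, Submodule.mem_bot, key,
      Ideal.Quotient.eq_zero_iff_mem, Ideal.mem_colon_span_singleton]
  · rintro ⟨hp, f, rfl⟩
    refine ⟨hp, Ideal.Quotient.mk L f, ?_⟩
    ext r
    rw [Submodule.mem_colon_singleton, Submodule.mem_bot, key,
      Ideal.Quotient.eq_zero_iff_mem, Ideal.mem_colon_span_singleton]

theorem mem_map_equiv' {e : A ≃+* B} {p : Ideal A} {x : B} :
    x ∈ Ideal.map e p ↔ e.symm x ∈ p := by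
  rw [← Ideal.comap_symm, Ideal.mem_comap]

theorem isPrime_map_equiv (e : A ≃+* B) (p : Ideal A) :
    (Ideal.map e p).IsPrime ↔ p.IsPrime := by
  constructor
  · intro h
    have hp : p = Ideal.comap e (Ideal.map e p) := by
      ext a; rw [Ideal.mem_comap, mem_map_equiv', e.symm_apply_apply]
    rw [hp]
    exact Ideal.IsPrime.comap _
  · intro h
    rw [← Ideal.comap_symm]
    exact Ideal.IsPrime.comap _

theorem colon_map_equiv (e : A ≃+* B) (L : Ideal A) (f : A) :
    (Ideal.map e L).colon (Ideal.span {e f}) = Ideal.map e (L.colon (Ideal.span {f})) := by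
  ext x
  rw [Ideal.mem_colon_span_singleton, mem_map_equiv', mem_map_equiv', Ideal.mem_colon_span_singleton,
    map_mul, e.symm_apply_apply]

theorem mem_assOf_map_equiv [IsNoetherianRing A] [IsNoetherianRing B] (e : A ≃+* B) (L p : Ideal A) :
    Ideal.map e p ∈ assOf (Ideal.map e L) ↔ p ∈ assOf L := by
  rw [mem_assOf_iff, mem_assOf_iff, isPrime_map_equiv]
  refine and_congr_right fun hp => ?_
  constructor
  · rintro ⟨g, hg⟩
    refine ⟨e.symm g, ?_⟩
    have hg' : Ideal.map e p = (Ideal.map e L).colon (Ideal.span {e (e.symm g)}) := by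
      rwa [e.apply_symm_apply]
    rw [colon_map_equiv] at hg'
    ext a
    have : e a ∈ Ideal.map e p ↔ e a ∈ Ideal.map e (L.colon (Ideal.span {e.symm g})) := by
      rw [hg']
    simpa only [mem_map_equiv', e.symm_apply_apply] using this
  · rintro ⟨f, rfl⟩
    exact ⟨e f, (colon_map_equiv e L f).symm⟩

theorem map_le_map_iff_equiv (e : A ≃+* B) {X Y : Ideal A} :
    Ideal.map e X ≤ Ideal.map e Y ↔ X ≤ Y := by
  constructor
  · intro h z hz
    have h2 : e z ∈ Ideal.map e Y := h (Ideal.mem_map_of_mem _ hz)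
    rwa [mem_map_equiv', e.symm_apply_apply] at h2
  · intro h
    exact Ideal.map_mono h

theorem map_inf_equiv (e : A ≃+* B) (X Y : Ideal A) :
    Ideal.map e (X ⊓ Y) = Ideal.map e X ⊓ Ideal.map e Y := by
  rw [← Ideal.comap_symm, ← Ideal.comap_symm, ← Ideal.comap_symm]
  exact Ideal.comap_inf ..

theorem map_equiv_map_hom {C : Type} [CommRing C] {F G : Type*} [FunLike F A B]
    [RingHomClass F A B] [FunLike G A C] [RingHomClass G A C]
    (f : F) (e : B ≃+* C) (g : G) (h : ∀ a, e (f a) = g a) (I : Ideal A) :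
    Ideal.map e (Ideal.map f I) = Ideal.map g I := by
  apply le_antisymm
  · rw [Ideal.map_le_iff_le_comap, Ideal.map_le_iff_le_comap]
    intro a ha
    rw [Ideal.mem_comap, Ideal.mem_comap, h]
    exact Ideal.mem_map_of_mem _ ha
  · rw [Ideal.map_le_iff_le_comap]
    intro a ha
    rw [Ideal.mem_comap, ← h]
    exact Ideal.mem_map_of_mem _ (Ideal.mem_map_of_mem _ ha)


variable {K : Type} [Field K] {σ : Type} {Tc : Type} [CommRing Tc] [Algebra K Tc]




noncomputable def sliceFun (l : Tc →ₗ[K] K) (p : MvPolynomial σ Tc) : MvPolynomial σ K :=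
  ∑ ν ∈ p.support, monomial ν (l (p.coeff ν))

theorem coeff_sliceFun (l : Tc →ₗ[K] K) (p : MvPolynomial σ Tc) (ν : σ →₀ ℕ) :
    coeff ν (sliceFun l p) = l (p.coeff ν) := by
  classical
  rw [sliceFun, coeff_sum]
  simp only [coeff_monomial]
  rw [Finset.sum_ite_eq' p.support ν fun μ => l (p.coeff μ)]
  split_ifs with h
  · rfl
  · rw [notMem_support_iff.mp h, map_zero]

noncomputable def slice (l : Tc →ₗ[K] K) : MvPolynomial σ Tc →ₗ[K] MvPolynomial σ K where
  toFun := sliceFun l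
  map_add' p q := by
    ext ν
    simp only [coeff_add, coeff_sliceFun, map_add]
  map_smul' c p := by
    ext ν
    simp only [coeff_sliceFun, coeff_smul, map_smul, RingHom.id_apply, smul_eq_mul]

theorem coeff_slice (l : Tc →ₗ[K] K) (p : MvPolynomial σ Tc) (ν : σ →₀ ℕ) :
    coeff ν (slice l p) = l (p.coeff ν) := coeff_sliceFun l p ν

theorem slice_monomial_mul (l : Tc →ₗ[K] K) (d : σ →₀ ℕ) (c : Tc) (q : MvPolynomial σ Tc) :
    slice l (monomial d c * q) =
      monomial d (1 : K) * slice (l ∘ₗ LinearMap.mulLeft K c) q := by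
  ext ν
  rw [coeff_slice, mul_comm (monomial d c) q, coeff_mul_monomial',
    mul_comm (monomial d (1 : K)) _, coeff_mul_monomial']
  split_ifs with h
  · rw [coeff_slice]
    simp [mul_comm]
  · rw [map_zero]

theorem slice_mul_C (l : Tc →ₗ[K] K) (g : Tc) (q : MvPolynomial σ Tc) :
    slice l (q * C g) = slice (l ∘ₗ LinearMap.mulLeft K g) q := by
  ext ν
  rw [coeff_slice, coeff_slice, mul_comm q (C g), coeff_C_mul]
  simp

theorem slice_map_algebraMap (l : Tc →ₗ[K] K) (a : MvPolynomial σ K) :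
    slice l (MvPolynomial.map (algebraMap K Tc) a) = l 1 • a := by
  ext ν
  rw [coeff_slice, coeff_map, coeff_smul]
  rw [Algebra.algebraMap_eq_smul_one, map_smul]
  simp [mul_comm]

/-- The ideal of polynomials all of whose functional slices lie in `I'`. -/
noncomputable def sliceIdeal (I' : Ideal (MvPolynomial σ K)) : Ideal (MvPolynomial σ Tc) where
  carrier := {q | ∀ l : Tc →ₗ[K] K, slice l q ∈ I'}
  add_mem' := by
    intro a b ha hb l
    rw [map_add]
    exact I'.add_mem (ha l) (hb l)
  zero_mem' := by
    intro l
    rw [map_zero]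
    exact I'.zero_mem
  smul_mem' := by
    intro s q hq l
    rw [smul_eq_mul]
    have hdec : s * q = ∑ d ∈ s.support, monomial d (s.coeff d) * q := by
      conv_lhs => rw [as_sum s]
      rw [Finset.sum_mul]
    rw [hdec, map_sum]
    refine Ideal.sum_mem _ fun d _ => ?_
    rw [slice_monomial_mul]
    exact Ideal.mul_mem_left _ _ (hq _)

theorem slice_mem_of_mem_map (I' : Ideal (MvPolynomial σ K)) {q : MvPolynomial σ Tc}
    (hq : q ∈ I'.map (MvPolynomial.map (algebraMap K Tc))) (l : Tc →ₗ[K] K) :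
    slice l q ∈ I' := by
  have : I'.map (MvPolynomial.map (algebraMap K Tc)) ≤ sliceIdeal (Tc := Tc) I' := by
    rw [Ideal.map_le_iff_le_comap]
    intro a ha
    intro l
    rw [slice_map_algebraMap]
    rw [Algebra.smul_def, algebraMap_eq]
    exact Ideal.mul_mem_left _ _ ha
  exact this hq l

/-- Every polynomial decomposes as `∑ map (aⱼ) * C tⱼ` where `aⱼ` are slices of `q`
and `tⱼ` lie in the span of the coefficients of `q`. -/
theorem exists_decomp (q : MvPolynomial σ Tc) :
    ∃ (r : ℕ) (a : Fin r → MvPolynomial σ K) (t : Fin r → Tc),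
      (∀ j, ∃ l : Tc →ₗ[K] K, a j = slice l q) ∧
      (∀ j, t j ∈ Submodule.span K (Set.range fun ν : σ →₀ ℕ => q.coeff ν)) ∧
      q = ∑ j, MvPolynomial.map (algebraMap K Tc) (a j) * C (t j) := by
  classical
  set U : Submodule K Tc := Submodule.span K (Set.range fun ν : σ →₀ ℕ => q.coeff ν) with hU
  have hfin : (Set.range fun ν : σ →₀ ℕ => q.coeff ν).Finite := by
    apply Set.Finite.subset (Set.Finite.insert 0 (q.support.finite_toSet.image fun ν => q.coeff ν))
    rintro x ⟨ν, rfl⟩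
    by_cases h : ν ∈ q.support
    · exact Set.mem_insert_of_mem _ ⟨ν, h, rfl⟩
    · simp only [Set.mem_insert_iff]
      left
      simpa using notMem_support_iff.mp h
  haveI : FiniteDimensional K U := FiniteDimensional.span_of_finite K hfin
  set b := Module.finBasis K U with hb
  have hmem : ∀ ν : σ →₀ ℕ, q.coeff ν ∈ U := fun ν =>
    Submodule.subset_span ⟨ν, rfl⟩
  -- extend the coordinate functionals
  have hext : ∀ j, ∃ E : Tc →ₗ[K] K, E ∘ₗ U.subtype = b.coord j := fun j =>
    LinearMap.exists_extend (b.coord j)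
  choose E hE using hext
  refine ⟨_, fun j => slice (E j) q, fun j => (b j : Tc), fun j => ⟨E j, rfl⟩,
    fun j => (b j).2, ?_⟩
  ext ν
  rw [coeff_sum]
  have hterm : ∀ j, coeff ν (MvPolynomial.map (algebraMap K Tc) (slice (E j) q) * C (b j : Tc))
      = b.repr ⟨q.coeff ν, hmem ν⟩ j • (b j : Tc) := by
    intro j
    rw [mul_comm, coeff_C_mul, coeff_map, coeff_slice]
    have : E j (q.coeff ν) = b.coord j ⟨q.coeff ν, hmem ν⟩ := by
      have := congrArg (fun (φ : U →ₗ[K] K) => φ ⟨q.coeff ν, hmem ν⟩) (hE j)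
      simpa using this
    rw [this, Module.Basis.coord_apply, Algebra.smul_def, mul_comm]
  rw [Finset.sum_congr rfl fun j _ => hterm j]
  have := congrArg (U.subtype) (b.sum_repr ⟨q.coeff ν, hmem ν⟩)
  simp only [map_sum, map_smul, Submodule.subtype_apply] at this
  exact this.symm


theorem mem_map_algebraMap_iff (I' : Ideal (MvPolynomial σ K)) (q : MvPolynomial σ Tc) :
    q ∈ I'.map (MvPolynomial.map (algebraMap K Tc)) ↔ ∀ l : Tc →ₗ[K] K, slice l q ∈ I' := by
  constructor
  · exact slice_mem_of_mem_map I'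
  · intro hq
    obtain ⟨r, a, t, ha, ht, hdec⟩ := exists_decomp (K := K) q
    rw [hdec]
    refine Ideal.sum_mem _ fun j _ => Ideal.mul_mem_right _ _ ?_
    obtain ⟨l, hl⟩ := ha j
    rw [hl]
    exact Ideal.mem_map_of_mem _ (hq l)

theorem inf_le_mul_of_disjoint (I' : Ideal (MvPolynomial σ K)) (J' : Ideal Tc) :
    (I'.map (MvPolynomial.map (algebraMap K Tc))) ⊓ (J'.map (C : Tc →+* MvPolynomial σ Tc)) ≤
      I'.map (MvPolynomial.map (algebraMap K Tc)) * J'.map (C : Tc →+* MvPolynomial σ Tc) := by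
  intro q hq
  obtain ⟨hqA, hqB⟩ := hq
  obtain ⟨r, a, t, ha, ht, hdec⟩ := exists_decomp (K := K) q
  rw [hdec]
  refine Ideal.sum_mem _ fun j _ => Ideal.mul_mem_mul ?_ ?_
  · obtain ⟨l, hl⟩ := ha j
    rw [hl]
    exact Ideal.mem_map_of_mem _ (slice_mem_of_mem_map I' hqA l)
  · refine Ideal.mem_map_of_mem _ ?_
    have hspan : Submodule.span K (Set.range fun ν : σ →₀ ℕ => q.coeff ν) ≤
        Submodule.restrictScalars K J' := by
      rw [Submodule.span_le]
      rintro x ⟨ν, rfl⟩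
      simpa using mem_map_C_iff.mp hqB ν
    exact hspan (ht j)

theorem assA_subset [IsDomain Tc] [IsNoetherianRing Tc] [Finite σ] (I' : Ideal (MvPolynomial σ K)) (J' : Ideal Tc)
    (hJ : J' ≠ ⊥) :
    assOf (I'.map (MvPolynomial.map (algebraMap K Tc))) ⊆
      assOf (I'.map (MvPolynomial.map (algebraMap K Tc)) *
        J'.map (C : Tc →+* MvPolynomial σ Tc)) := by
  set A := I'.map (MvPolynomial.map (algebraMap K Tc)) with hA
  set B := J'.map (C : Tc →+* MvPolynomial σ Tc) with hB
  intro p hp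
  rw [mem_assOf_iff] at hp ⊢
  obtain ⟨hpp, f, hf⟩ := hp
  obtain ⟨g0, hg0J, hg0⟩ := (Submodule.ne_bot_iff _).mp hJ
  refine ⟨hpp, f * C g0, ?_⟩
  rw [hf]
  ext r
  rw [Ideal.mem_colon_span_singleton, Ideal.mem_colon_span_singleton]
  constructor
  · intro hrf
    rw [← mul_assoc]
    exact Ideal.mul_mem_mul hrf (Ideal.mem_map_of_mem _ hg0J)
  · intro h
    have hAmem : r * f * C g0 ∈ A := by
      have h2 : r * (f * C g0) ∈ A := (Ideal.mul_le_inf.trans inf_le_left) h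
      rwa [← mul_assoc] at h2
    rw [hA, mem_map_algebraMap_iff]
    intro l'
    have hinj : Function.Injective (LinearMap.mulLeft K g0) := by
      intro x y hxy
      simp only [LinearMap.mulLeft_apply] at hxy
      exact mul_left_cancel₀ hg0 hxy
    set e0 := LinearEquiv.ofInjective (LinearMap.mulLeft K g0) hinj with he0
    obtain ⟨Eext, hEext⟩ := LinearMap.exists_extend (l' ∘ₗ (e0.symm.toLinearMap))
    have heq : Eext ∘ₗ LinearMap.mulLeft K g0 = l' := by
      ext t
      have h1 := congrArg (fun (φ : _ →ₗ[K] K) => φ (e0 t)) hEext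
      simp only [LinearMap.comp_apply, Submodule.subtype_apply, LinearEquiv.coe_coe,
        LinearEquiv.symm_apply_apply] at h1
      have h2 : ((e0 t : (LinearMap.range (LinearMap.mulLeft K g0)))) =
          (⟨g0 * t, ⟨t, rfl⟩⟩ : (LinearMap.range (LinearMap.mulLeft K g0))) := by
        apply Subtype.ext
        simp [he0, LinearEquiv.ofInjective_apply]
      rw [h2] at h1
      simpa using h1
    have hs := slice_mem_of_mem_map I' hAmem Eext
    rw [slice_mul_C, heq] at hs
    exact hs


section Slevel

variable {σ τ : Type}

theorem sumEquiv_rename_inl (a : MvPolynomial σ K) :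
    (sumAlgEquiv K σ τ) (rename Sum.inl a) =
      MvPolynomial.map (algebraMap K (MvPolynomial τ K)) a := by
  have h := AlgHom.congr_fun (sumAlgEquiv_comp_rename_inl K σ τ) a
  simpa [mapAlgHom_apply, Algebra.ofId] using h

theorem sumEquiv_rename_inr (a : MvPolynomial τ K) :
    (sumAlgEquiv K σ τ) (rename Sum.inr a) = C a := by
  have h := AlgHom.congr_fun (sumAlgEquiv_comp_rename_inr K σ τ) a
  simpa [IsScalarTower.toAlgHom, algebraMap_eq] using h

theorem swapEquiv_rename_inr (a : MvPolynomial τ K) :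
    (renameEquiv K (Equiv.sumComm σ τ)) (rename Sum.inr a) = rename Sum.inl a := by
  simp only [renameEquiv_apply, rename_rename]
  congr 1

theorem swapEquiv_rename_inl (a : MvPolynomial σ K) :
    (renameEquiv K (Equiv.sumComm σ τ)) (rename Sum.inl a) = rename Sum.inr a := by
  simp only [renameEquiv_apply, rename_rename]
  congr 1

/-- One-sided inclusion at the level of `MvPolynomial (σ ⊕ τ) K`. -/
theorem assA_subset_S [Finite σ] [Finite τ] (I' : Ideal (MvPolynomial σ K)) (J' : Ideal (MvPolynomial τ K))
    (hJ' : J' ≠ ⊥) :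
    assOf (Ideal.map (rename Sum.inl) I') ⊆
      assOf (Ideal.map (rename Sum.inl) I' * Ideal.map (rename Sum.inr) J') := by
  set A := Ideal.map (rename (R := K) Sum.inl) I' with hA
  set B := Ideal.map (rename (R := K) Sum.inr) J' with hB
  set e := (sumAlgEquiv K σ τ).toRingEquiv with he
  have hAe : Ideal.map e A = I'.map (MvPolynomial.map (algebraMap K (MvPolynomial τ K))) :=
    map_equiv_map_hom _ e _ (fun a => sumEquiv_rename_inl a) I'
  have hBe : Ideal.map e B = J'.map (C : MvPolynomial τ K →+* MvPolynomial σ (MvPolynomial τ K)) :=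
    map_equiv_map_hom _ e _ (fun a => sumEquiv_rename_inr a) J'
  intro p hp
  have h1 : Ideal.map e p ∈ assOf (Ideal.map e A) := (mem_assOf_map_equiv e A p).mpr hp
  rw [hAe] at h1
  have h2 := assA_subset I' J' hJ' h1
  rw [← hAe, ← hBe, ← Ideal.map_mul] at h2
  exact (mem_assOf_map_equiv e (A * B) p).mp h2

theorem inf_eq_mul_S (I' : Ideal (MvPolynomial σ K)) (J' : Ideal (MvPolynomial τ K)) :
    Ideal.map (rename (R := K) Sum.inl) I' ⊓ Ideal.map (rename Sum.inr) J' =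
      Ideal.map (rename Sum.inl) I' * Ideal.map (rename Sum.inr) J' := by
  set A := Ideal.map (rename (R := K) Sum.inl) I' with hA
  set B := Ideal.map (rename (R := K) Sum.inr) J' with hB
  set e := (sumAlgEquiv K σ τ).toRingEquiv with he
  have hAe : Ideal.map e A = I'.map (MvPolynomial.map (algebraMap K (MvPolynomial τ K))) :=
    map_equiv_map_hom _ e _ (fun a => sumEquiv_rename_inl a) I'
  have hBe : Ideal.map e B = J'.map (C : MvPolynomial τ K →+* MvPolynomial σ (MvPolynomial τ K)) :=
    map_equiv_map_hom _ e _ (fun a => sumEquiv_rename_inr a) J'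
  refine le_antisymm ?_ Ideal.mul_le_inf
  rw [← map_le_map_iff_equiv e, map_inf_equiv, Ideal.map_mul, hAe, hBe]
  exact inf_le_mul_of_disjoint I' J'

theorem main_S [Finite σ] [Finite τ] (I' : Ideal (MvPolynomial σ K)) (J' : Ideal (MvPolynomial τ K))
    (hI' : I' ≠ ⊥) (hJ' : J' ≠ ⊥) :
    assOf (Ideal.map (rename Sum.inl) I' * Ideal.map (rename Sum.inr) J') =
      assOf (Ideal.map (rename (R := K) Sum.inl) I') ∪
        assOf (Ideal.map (rename Sum.inr) J') := by
  set A := Ideal.map (rename (R := K) Sum.inl) I' with hA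
  set B := Ideal.map (rename (R := K) Sum.inr) J' with hB
  apply Set.eq_of_subset_of_subset
  · -- Ass(A*B) ⊆ Ass A ∪ Ass B
    intro p hp
    rw [mem_assOf_iff] at hp
    obtain ⟨hpp, f, hf⟩ := hp
    rw [← inf_eq_mul_S I' J'] at hf
    have hco : (A ⊓ B).colon (Ideal.span {f}) =
        A.colon (Ideal.span {f}) ⊓ B.colon (Ideal.span {f}) := by
      ext r
      simp only [Ideal.mem_colon_span_singleton, Submodule.mem_inf, Ideal.mem_inf]
    have hmul : A.colon (Ideal.span {f}) * B.colon (Ideal.span {f}) ≤ p := by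
      rw [hf, hco]
      exact Ideal.mul_le_inf
    rcases hpp.mul_le.mp hmul with h | h
    · left
      rw [mem_assOf_iff]
      exact ⟨hpp, f, le_antisymm (by rw [hf, hco]; exact inf_le_left) h⟩
    · right
      rw [mem_assOf_iff]
      exact ⟨hpp, f, le_antisymm (by rw [hf, hco]; exact inf_le_right) h⟩
  · refine Set.union_subset (assA_subset_S I' J' hJ') ?_
    -- Ass B ⊆ Ass (A*B) via swapping
    set sw := (renameEquiv K (Equiv.sumComm σ τ)).toRingEquiv with hsw
    have hswB : Ideal.map sw B = Ideal.map (rename Sum.inl) J' :=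
      map_equiv_map_hom _ sw _ (fun a => swapEquiv_rename_inr a) J'
    have hswA : Ideal.map sw A = Ideal.map (rename Sum.inr) I' :=
      map_equiv_map_hom _ sw _ (fun a => swapEquiv_rename_inl a) I'
    intro p hp
    have h1 : Ideal.map sw p ∈ assOf (Ideal.map sw B) := (mem_assOf_map_equiv sw B p).mpr hp
    rw [hswB] at h1
    have h2 := assA_subset_S J' I' hI' h1
    rw [← hswB, ← hswA, ← Ideal.map_mul] at h2
    have h3 := (mem_assOf_map_equiv sw (B * A) p).mp h2
    rwa [mul_comm] at h3

end Slevel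

theorem pow_ne_bot {R : Type} [CommRing R] [IsDomain R] {I : Ideal R} (h : I ≠ ⊥) (k : ℕ) :
    I ^ k ≠ ⊥ := by
  obtain ⟨a, haI, ha0⟩ := (Submodule.ne_bot_iff _).mp h
  exact (Submodule.ne_bot_iff _).mpr ⟨a ^ k, Ideal.pow_mem_pow haI k, pow_ne_zero k ha0⟩


end Stmt0Aux

/-- Lemma 2.1: for nonzero proper graded ideals `I ⊂ R`, `J ⊂ T`,
identified with their extensions to `S = R ⊗_K T`, one has
`Ass((IJ)^k) = Ass(I^k) ∪ Ass(J^k)` for all `k ≥ 1`; consequently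
`Ass^∞(IJ) = Ass^∞(I) ∪ Ass^∞(J)`. -/
theorem stmt0 {K : Type} [Field K] {n m : ℕ}
    (I : Ideal (MvPolynomial (Fin n) K)) (J : Ideal (MvPolynomial (Fin m) K))
    (hInz : I ≠ ⊥) (hIpr : I ≠ ⊤) (hIgr : IsGradedIdeal I)
    (hJnz : J ≠ ⊥) (hJpr : J ≠ ⊤) (hJgr : IsGradedIdeal J)
    (eI eJ : Ideal (MvPolynomial (Fin n ⊕ Fin m) K))
    (heI : eI = Ideal.map (rename Sum.inl) I)
    (heJ : eJ = Ideal.map (rename Sum.inr) J) :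
    (∀ k : ℕ, 1 ≤ k → assOf ((eI * eJ) ^ k) = assOf (eI ^ k) ∪ assOf (eJ ^ k)) ∧
    (∀ AI AJ AIJ : Set (Ideal (MvPolynomial (Fin n ⊕ Fin m) K)),
      IsStableAssValue eI AI → IsStableAssValue eJ AJ →
      IsStableAssValue (eI * eJ) AIJ → AIJ = AI ∪ AJ) := by
  have part1 : ∀ k : ℕ, 1 ≤ k → assOf ((eI * eJ) ^ k) = assOf (eI ^ k) ∪ assOf (eJ ^ k) := by
    intro k _
    rw [heI, heJ, mul_pow, ← Ideal.map_pow, ← Ideal.map_pow]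
    exact Stmt0Aux.main_S (I ^ k) (J ^ k) (Stmt0Aux.pow_ne_bot hInz k)
      (Stmt0Aux.pow_ne_bot hJnz k)
  refine ⟨part1, ?_⟩
  rintro AI AJ AIJ ⟨N1, h1⟩ ⟨N2, h2⟩ ⟨N3, h3⟩
  rw [← h1 (N1 + N2 + N3 + 1) (by omega), ← h2 (N1 + N2 + N3 + 1) (by omega),
    ← h3 (N1 + N2 + N3 + 1) (by omega)]
  exact part1 _ (by omega)
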